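/- arXiv:2205.13371 — 4 statements merged into one kernel-verified Lean document; each statement's English description precedes it below -/
import Mathlib

section
/- For any tangent vector u ∈ T_x𝕃^n with ⟨u,u⟩_L > 0, the first coordinate of exp_x(u) = cosh(‖u‖_L)·x + sinh(‖u‖_L)·u/‖u‖_L is positive, so exp_x(u) lies in the upper sheet of the hyperboloid. -/
open Real

noncomputable section

/-- Lorentzian product on ℝ^{n+1}. -/
def lprod {n : ℕ} (x y : Fin (n+1) → ℝ) : ℝ :=
  -(x 0 * y 0) + ∑ i : Fin n, x i.succ * y i.succ

/-- The Lorentz model 𝕃^n. -/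
def lorentz {n : ℕ} : Set (Fin (n+1) → ℝ) := {x | lprod x x = -1 ∧ 0 < x 0}

/-- Lorentzian norm. -/
def lnorm {n : ℕ} (u : Fin (n+1) → ℝ) : ℝ := Real.sqrt (lprod u u)

/-- Exponential map of the Lorentz model. -/
def lexp {n : ℕ} (x u : Fin (n+1) → ℝ) : Fin (n+1) → ℝ :=
  Real.cosh (lnorm u) • x + (Real.sinh (lnorm u) / lnorm u) • u

/-- Parallel transport PT_{x→y}(v) = v + (⟨y - αx, v⟩_L/(α+1))·(x+y), α = -⟨x,y⟩_L. -/
def ptrans {n : ℕ} (x y v : Fin (n+1) → ℝ) : Fin (n+1) → ℝ :=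
  v + ((lprod (y - (-(lprod x y)) • x) v) / (-(lprod x y) + 1)) • (x + y)

/-- Origin of the Lorentz model. -/
def originL {n : ℕ} : Fin (n+1) → ℝ := Fin.cons 1 0

/-- Projection from the Lorentz model to the Poincaré ball. -/
def lproj {n : ℕ} (u : Fin (n+1) → ℝ) : Fin n → ℝ := fun i => u i.succ / (u 0 + 1)

/-- Inverse hyperbolic cosine. -/
def acosh (x : ℝ) : ℝ := Real.log (x + Real.sqrt (x^2 - 1))

theorem lexp_first_coord_pos {n : ℕ} (x u : Fin (n+1) → ℝ)
    (hx : lprod x x = -1) (hx0 : 0 < x 0)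
    (hu : lprod u x = 0) (huu : 0 < lprod u u) :
    0 < lexp x u 0 := by
  have hr : 0 < lnorm u := Real.sqrt_pos.mpr huu
  have hr2 : lnorm u ^ 2 = lprod u u := Real.sq_sqrt huu.le
  have hcs : (∑ i : Fin n, u i.succ * x i.succ) ^ 2 ≤
      (∑ i : Fin n, u i.succ ^ 2) * (∑ i : Fin n, x i.succ ^ 2) :=
    Finset.sum_mul_sq_le_sq_mul_sq Finset.univ _ _
  have hux : ∑ i : Fin n, u i.succ * x i.succ = u 0 * x 0 := by
    have := hu; unfold lprod at this; linarith
  have huu' : ∑ i : Fin n, u i.succ ^ 2 = lprod u u + u 0 ^ 2 := by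
    unfold lprod
    rw [Finset.sum_congr rfl fun i _ => sq (u i.succ)]; ring
  have hxx' : ∑ i : Fin n, x i.succ ^ 2 = x 0 ^ 2 - 1 := by
    have h := hx; unfold lprod at h
    rw [Finset.sum_congr rfl fun i _ => sq (x i.succ)]; nlinarith
  rw [hux, huu', hxx'] at hcs
  have key : u 0 ^ 2 < lnorm u ^ 2 * x 0 ^ 2 := by nlinarith
  have hs : 0 < Real.sinh (lnorm u) := by
    rwa [Real.sinh_pos_iff]
  have hcsh : Real.sinh (lnorm u) < Real.cosh (lnorm u) := Real.sinh_lt_cosh _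
  have hlt : -(lnorm u * x 0) < u 0 := by nlinarith [sq_nonneg (u 0 + lnorm u * x 0), mul_pos hr hx0]
  have hnum : 0 < Real.cosh (lnorm u) * x 0 * lnorm u + Real.sinh (lnorm u) * u 0 := by
    nlinarith [mul_pos hs (by linarith : (0:ℝ) < u 0 + lnorm u * x 0),
      mul_pos (mul_pos hr hx0) (sub_pos.mpr hcsh)]
  have h0 : lexp x u 0 = (Real.cosh (lnorm u) * x 0 * lnorm u
      + Real.sinh (lnorm u) * u 0) / lnorm u := by
    simp only [lexp, Pi.add_apply, Pi.smul_apply, smul_eq_mul]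
    field_simp
  rw [h0]
  exact div_pos hnum hr
end
end

section
/- Parallel transport preserves the Lorentzian inner product: for x, y ∈ 𝕃^n and tangent vectors v, w ∈ T_x𝕃^n, letting α = -⟨x,y⟩_L and PT_{x→y}(v) := v + (⟨y - αx, v⟩_L/(α+1))·(x+y), one has ⟨PT_{x→y}(v), PT_{x→y}(w)⟩_L = ⟨v,w⟩_L. -/
open Real

noncomputable section

lemma lprod_comm {n : ℕ} (x y : Fin (n+1) → ℝ) : lprod x y = lprod y x := by
  simp [lprod, mul_comm]
lemma lprod_add_left {n : ℕ} (x y z : Fin (n+1) → ℝ) :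
    lprod (x + y) z = lprod x z + lprod y z := by
  simp [lprod, add_mul, Finset.sum_add_distrib]; ring
lemma lprod_add_right {n : ℕ} (x y z : Fin (n+1) → ℝ) :
    lprod x (y + z) = lprod x y + lprod x z := by
  rw [lprod_comm, lprod_add_left, lprod_comm y x, lprod_comm z x]
lemma lprod_smul_left {n : ℕ} (c : ℝ) (x y : Fin (n+1) → ℝ) :
    lprod (c • x) y = c * lprod x y := by
  simp [lprod, Finset.mul_sum, mul_add]; ring
lemma lprod_smul_right {n : ℕ} (c : ℝ) (x y : Fin (n+1) → ℝ) :
    lprod x (c • y) = c * lprod x y := by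
  rw [lprod_comm, lprod_smul_left, lprod_comm y x]
lemma lprod_sub_left {n : ℕ} (x y z : Fin (n+1) → ℝ) :
    lprod (x - y) z = lprod x z - lprod y z := by
  simp [lprod, sub_mul, Finset.sum_sub_distrib]; ring

lemma lprod_le_neg_one {n : ℕ} {x y : Fin (n+1) → ℝ}
    (hx : x ∈ lorentz) (hy : y ∈ lorentz) : lprod x y ≤ -1 := by
  obtain ⟨hx1, hx0⟩ := hx
  obtain ⟨hy1, hy0⟩ := hy
  simp only [lprod] at hx1 hy1 ⊢
  set Sx := ∑ i : Fin n, x i.succ * x i.succ with hSx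
  set Sy := ∑ i : Fin n, y i.succ * y i.succ with hSy
  set T := ∑ i : Fin n, x i.succ * y i.succ with hT
  have hCS : T ^ 2 ≤ Sx * Sy := by
    have h2 := Finset.sum_mul_sq_le_sq_mul_sq Finset.univ
      (fun i : Fin n => x i.succ) (fun i : Fin n => y i.succ)
    simpa [hSx, hSy, hT, sq] using h2
  have hSxn : 0 ≤ Sx := Finset.sum_nonneg fun i _ => mul_self_nonneg _
  have hSyn : 0 ≤ Sy := Finset.sum_nonneg fun i _ => mul_self_nonneg _
  have hx1' : Sx = x 0 * x 0 - 1 := by linarith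
  have hy1' : Sy = y 0 * y 0 - 1 := by linarith
  have hx01 : 1 ≤ x 0 := by nlinarith
  have hy01 : 1 ≤ y 0 := by nlinarith
  have hP : 0 ≤ x 0 * y 0 - 1 := by nlinarith
  nlinarith [sq_nonneg (x 0 - y 0), sq_nonneg (x 0 * y 0 - 1 - T), sq_nonneg (x 0 * y 0 - 1 + T), mul_pos hx0 hy0]

theorem ptrans_preserves_lprod {n : ℕ} (x y v w : Fin (n+1) → ℝ)
    (hx : x ∈ lorentz) (hy : y ∈ lorentz)
    (hv : lprod v x = 0) (hw : lprod w x = 0) :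
    lprod (ptrans x y v) (ptrans x y w) = lprod v w := by
  have hxy := lprod_le_neg_one hx hy
  have hc : -(lprod x y) + 1 ≠ 0 := by nlinarith
  have hxv : lprod x v = 0 := by rw [lprod_comm]; exact hv
  have hxw : lprod x w = 0 := by rw [lprod_comm]; exact hw
  have hxx : lprod x x = -1 := hx.1
  have hyy : lprod y y = -1 := hy.1
  have hyx : lprod y x = lprod x y := lprod_comm y x
  have hvy : lprod v y = lprod y v := lprod_comm v y
  have hwy : lprod w y = lprod y w := lprod_comm w y
  simp only [ptrans, lprod_add_left, lprod_add_right, lprod_sub_left, lprod_smul_left,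
    lprod_smul_right]
  field_simp
  ring_nf
  simp only [hv, hw, hxv, hxw, hxx, hyy, hyx, hvy, hwy]
  ring
end
end

section
/- (Proposition 2, explicit form) Let μ ∈ 𝕃^n, s ∈ ℝ^n nonzero, v := PT_{0_L→μ}([0,s]), c := √⟨v,v⟩_L > 0, and define the curve γ(t) := Proj(cosh(ct)·μ + sinh(ct)·v/c) in the Poincaré ball, where Proj(u) = u_{1:}/(u₀+1). Then the derivative of γ at t = 0 equals s/(μ₀+1); in particular the tangent vector of the projected curve at Proj(μ) is a positive scalar multiple of s. -/
open Real

noncomputable section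

theorem projected_geodesic_tangent {n : ℕ} (μ : Fin (n+1) → ℝ) (s : Fin n → ℝ)
    (hμ : μ ∈ lorentz) (hs : s ≠ 0)
    (v : Fin (n+1) → ℝ) (hv : v = ptrans originL μ (Fin.cons 0 s))
    (c : ℝ) (hc : c = Real.sqrt (lprod v v)) (hcpos : 0 < c) :
    HasDerivAt (fun t : ℝ =>
        lproj (Real.cosh (c * t) • μ + (Real.sinh (c * t) / c) • v))
      (fun i : Fin n => s i / (μ 0 + 1)) 0 := by
  obtain ⟨hμ1, hμ0⟩ := hμ
  have hd : μ 0 + 1 ≠ 0 := by positivity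
  set A := ∑ i : Fin n, μ i.succ * s i with hA
  have hlo : lprod originL μ = -(μ 0) := by
    simp [lprod, originL]
  have hK : lprod (μ - (-(lprod originL μ)) • originL) (Fin.cons 0 s) = A := by
    simp [lprod, originL, hlo, hA]
  have hv0 : v 0 = A := by
    rw [hv, ptrans, hK, hlo]
    simp [originL]
    field_simp
    ring
  have hvs : ∀ i : Fin n, v i.succ = s i + A / (μ 0 + 1) * μ i.succ := by
    intro i
    rw [hv, ptrans, hK, hlo]
    simp [originL]
  rw [hasDerivAt_pi]
  intro i
  have hct : HasDerivAt (fun t : ℝ => c * t) (c * 1) 0 := (hasDerivAt_id 0).const_mul c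
  have hcosh : HasDerivAt (fun t : ℝ => Real.cosh (c * t)) (Real.sinh (c * 0) * (c * 1)) 0 :=
    hct.cosh
  have hsinh : HasDerivAt (fun t : ℝ => Real.sinh (c * t) / c) (Real.cosh (c * 0) * (c * 1) / c) 0 :=
    hct.sinh.div_const c
  have hN : HasDerivAt (fun t : ℝ => Real.cosh (c * t) * μ i.succ + Real.sinh (c * t) / c * v i.succ)
      (Real.sinh (c * 0) * (c * 1) * μ i.succ + Real.cosh (c * 0) * (c * 1) / c * v i.succ) 0 :=
    (hcosh.mul_const _).add (hsinh.mul_const _)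
  have hD : HasDerivAt (fun t : ℝ => Real.cosh (c * t) * μ 0 + Real.sinh (c * t) / c * v 0 + 1)
      (Real.sinh (c * 0) * (c * 1) * μ 0 + Real.cosh (c * 0) * (c * 1) / c * v 0) 0 := by
    simpa using ((hcosh.mul_const (μ 0)).add (hsinh.mul_const (v 0))).add_const 1
  have hD0 : Real.cosh (c * 0) * μ 0 + Real.sinh (c * 0) / c * v 0 + 1 ≠ 0 := by
    simp [hd]
  have hq := hN.div hD hD0
  have heq : (fun t : ℝ => lproj (Real.cosh (c * t) • μ + (Real.sinh (c * t) / c) • v) i)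
      = fun t : ℝ => (Real.cosh (c * t) * μ i.succ + Real.sinh (c * t) / c * v i.succ) /
        (Real.cosh (c * t) * μ 0 + Real.sinh (c * t) / c * v 0 + 1) := by
    funext t
    simp [lproj, smul_eq_mul]
  rw [heq]
  refine hq.congr_deriv ?_
  rw [hv0, hvs i]
  have hcne : c ≠ 0 := ne_of_gt hcpos
  simp only [mul_zero, Real.cosh_zero, Real.sinh_zero, one_mul, mul_one, zero_div, zero_mul, add_zero, zero_add]
  field_simp
  ring
end
end

section
/- The rotation matrix formula gives an orthogonal matrix: for unit vectors x, y ∈ ℝ^n with ⟨x,y⟩ ≠ -1, the matrix R := I + K + K²/(1+⟨x,y⟩), where K := yᵀx - xᵀy is the skew-symmetric matrix with entries K_{ij} = y_i x_j - x_i y_j, satisfies Rᵀ R = I. -/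
open Matrix

noncomputable section

lemma vmv_mul {n : ℕ} (a b c d : Fin n → ℝ) :
    vecMulVec a b * vecMulVec c d = (b ⬝ᵥ c) • vecMulVec a d := by
  ext i j
  simp only [mul_apply, vecMulVec_apply, Matrix.smul_apply, dotProduct, smul_eq_mul,
    Finset.sum_mul, Finset.mul_sum]
  exact Finset.sum_congr rfl fun k _ => by ring

theorem rotation_is_orthogonal {n : ℕ} (x y : Fin n → ℝ)
    (hx : ∑ i, (x i)^2 = 1) (hy : ∑ i, (y i)^2 = 1)
    (hxy : x ⬝ᵥ y ≠ -1) :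
    (((1 : Matrix (Fin n) (Fin n) ℝ) + (vecMulVec y x - vecMulVec x y) +
        (1 / (1 + x ⬝ᵥ y)) • ((vecMulVec y x - vecMulVec x y) *
          (vecMulVec y x - vecMulVec x y)))ᵀ *
      ((1 : Matrix (Fin n) (Fin n) ℝ) + (vecMulVec y x - vecMulVec x y) +
        (1 / (1 + x ⬝ᵥ y)) • ((vecMulVec y x - vecMulVec x y) *
          (vecMulVec y x - vecMulVec x y)))) = 1 := by
  set K : Matrix (Fin n) (Fin n) ℝ := vecMulVec y x - vecMulVec x y with hK
  set s : ℝ := x ⬝ᵥ y with hs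
  have hs1 : 1 + s ≠ 0 := fun h => hxy (by linarith [h])
  set c : ℝ := 1 / (1 + s) with hc
  have hxx : x ⬝ᵥ x = 1 := by simpa [dotProduct, sq] using hx
  have hyy : y ⬝ᵥ y = 1 := by simpa [dotProduct, sq] using hy
  have hyx : y ⬝ᵥ x = s := by rw [dotProduct_comm]
  -- K transpose
  have hKT : Kᵀ = -K := by
    rw [hK]
    ext i j
    simp [vecMulVec_apply, mul_comm]
  -- K^3
  have hK3 : K * (K * K) = (-(1 - s^2)) • K := by
    rw [hK]
    simp only [Matrix.sub_mul, Matrix.mul_sub, vmv_mul, hxx, hyy, hyx, ← hs,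
      Matrix.smul_mul, Matrix.mul_smul, one_smul, smul_sub, smul_smul]
    ext i j
    simp [vecMulVec_apply]
    ring
  have hK4 : (K * K) * (K * K) = (-(1 - s^2)) • (K * K) := by
    rw [Matrix.mul_assoc, hK3, Matrix.mul_smul]
  -- transpose of R
  have hRT : ((1 : Matrix (Fin n) (Fin n) ℝ) + K + c • (K * K))ᵀ
      = 1 - K + c • (K * K) := by
    simp [transpose_add, transpose_smul, transpose_mul, hKT, sub_eq_add_neg,
      Matrix.neg_mul, Matrix.mul_neg]
  rw [hRT]
  have expand : (1 - K + c • (K * K)) * (1 + K + c • (K * K))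
      = 1 + (2 * c - 1) • (K * K) + (c * c) • ((K * K) * (K * K)) := by
    simp only [Matrix.add_mul, Matrix.sub_mul, Matrix.mul_add, Matrix.one_mul,
      Matrix.mul_one, Matrix.smul_mul, Matrix.mul_smul, smul_smul]
    simp only [← Matrix.mul_assoc]
    module
  rw [expand, hK4, smul_smul]
  have key : ∀ t : ℝ, 1 + t ≠ 0 →
      2 * (1/(1+t)) - 1 + (1/(1+t)) * (1/(1+t)) * (-(1 - t^2)) = 0 := by
    intro t ht; field_simp; ring
  have hcoef1 : (2 * c - 1 : ℝ) + (c * c * -(1 - s ^ 2)) = 0 := by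
    rw [hc]; exact key s hs1
  have : (2 * c - 1) • (K * K) + (c * c * -(1 - s ^ 2)) • (K * K) = 0 := by
    rw [← add_smul, hcoef1, zero_smul]
  rw [add_assoc, this, add_zero]
end
end
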